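/- For k ≥ 2 and s ∈ (0,1], the difference P(|min(X₁,…,X_{k-1},s)| < |Z|) − P(|max(X₁,…,X_{k-1},s)| < |Z|) equals ((1+s)^k + (1−s)^k − 2)/(k·2^{k-1}), where all variables are i.i.d. uniform on [-1,1]. -/

import Mathlib

open MeasureTheory

noncomputable def unif : Measure ℝ :=
  (2 : ENNReal)⁻¹ • (volume.restrict (Set.Icc (-1 : ℝ) 1))

lemma unif_apply (s : Set ℝ) : unif s = 2⁻¹ * volume (Set.Icc (-1:ℝ) 1 ∩ s) := by
  simp [unif, Measure.restrict_apply' measurableSet_Icc, Set.inter_comm]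

lemma two_inv_two : (2:ENNReal)⁻¹ * 2 = 1 := by
  rw [ENNReal.inv_mul_cancel] <;> norm_num

instance : IsProbabilityMeasure unif := by
  constructor
  rw [unif_apply]
  simp [Real.volume_Icc]
  norm_num
  exact two_inv_two

lemma unif_compl_Icc : unif (Set.Icc (-1:ℝ) 1)ᶜ = 0 := by
  rw [unif_apply, Set.inter_compl_self]
  simp

-- generic helper lemmas for the t-integral
lemma lint_piece {a b : ℝ} (hab : a ≤ b) (G : ℝ → ℝ) (hG : Continuous G)
    (hG0 : ∀ t ∈ Set.Ioo a b, 0 ≤ G t) (F : ℝ → ENNReal)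
    (hF : ∀ t ∈ Set.Ioo a b, F t = ENNReal.ofReal (G t)) :
    ∫⁻ t in Set.Ioc a b, F t = ENNReal.ofReal (∫ t in a..b, G t) := by
  rw [setLIntegral_congr (Ioo_ae_eq_Ioc (a := a) (b := b)).symm]
  rw [setLIntegral_congr_fun measurableSet_Ioo hF]
  rw [← ofReal_integral_eq_lintegral_ofReal
    ((hG.integrableOn_Icc).mono_set Set.Ioo_subset_Icc_self)
    ((ae_restrict_iff' measurableSet_Ioo).2 (ae_of_all _ hG0))]
  rw [intervalIntegral.integral_of_le hab, integral_Ioc_eq_integral_Ioo]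

lemma int_J1 (n : ℕ) (a b : ℝ) :
    ∫ t in a..b, ((2-t)/2)^n = ((2-a)^(n+1) - (2-b)^(n+1))/(2^n * (n+1)) := by
  have : ∀ t : ℝ, ((2-t)/2)^n = (2-t)^n / 2^n := fun t => div_pow _ _ _
  simp_rw [this]
  rw [intervalIntegral.integral_div]
  rw [intervalIntegral.integral_comp_sub_left (fun x => x^n) 2]
  rw [integral_pow, div_div, mul_comm ((↑n:ℝ)+1)]

lemma int_J2 (n : ℕ) (a b : ℝ) :
    ∫ t in a..b, (t/2)^n = (b^(n+1) - a^(n+1))/(2^n * (n+1)) := by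
  have : ∀ t : ℝ, (t/2)^n = t^n / 2^n := fun t => div_pow _ _ _
  simp_rw [this]
  rw [intervalIntegral.integral_div, integral_pow, div_div, mul_comm ((↑n:ℝ)+1)]

lemma unif_singleton (a : ℝ) : unif {a} = 0 := by
  rw [unif_apply]
  rw [measure_mono_null Set.inter_subset_right (Real.volume_singleton)]
  simp

lemma unif_Ici {a : ℝ} (h : -1 ≤ a) : unif (Set.Ici a) = ENNReal.ofReal ((1 - a)/2) := by
  rw [unif_apply]
  rw [show Set.Icc (-1:ℝ) 1 ∩ Set.Ici a = Set.Icc a 1 by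
    ext x; simp only [Set.mem_inter_iff, Set.mem_Icc, Set.mem_Ici]; constructor
    · rintro ⟨⟨_, h2⟩, h3⟩; exact ⟨h3, h2⟩
    · rintro ⟨h1, h2⟩; exact ⟨⟨le_trans h h1, h2⟩, h1⟩]
  rw [Real.volume_Icc, ENNReal.ofReal_div_of_pos (by norm_num),
    ENNReal.div_eq_inv_mul]
  norm_num

lemma unif_Ioi {a : ℝ} (h : -1 ≤ a) : unif (Set.Ioi a) = ENNReal.ofReal ((1 - a)/2) := by
  refine le_antisymm ?_ ?_
  · rw [← unif_Ici h]
    exact measure_mono Set.Ioi_subset_Ici_self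
  · calc ENNReal.ofReal ((1-a)/2) = unif (Set.Ici a) := (unif_Ici h).symm
      _ = unif ({a} ∪ Set.Ioi a) := by
          congr 1; ext x; simp [Set.mem_Ici, le_iff_lt_or_eq, eq_comm]
      _ ≤ unif {a} + unif (Set.Ioi a) := measure_union_le _ _
      _ = unif (Set.Ioi a) := by rw [unif_singleton, zero_add]

lemma unif_Iio {b : ℝ} (h : b ≤ 1) : unif (Set.Iio b) = ENNReal.ofReal ((1 + b)/2) := by
  rw [unif_apply]
  rw [show Set.Icc (-1:ℝ) 1 ∩ Set.Iio b = Set.Ico (-1) b by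
    ext x; simp only [Set.mem_inter_iff, Set.mem_Icc, Set.mem_Ico, Set.mem_Iio]; constructor
    · rintro ⟨⟨h1, _⟩, h3⟩; exact ⟨h1, h3⟩
    · rintro ⟨h1, h2⟩; exact ⟨⟨h1, le_trans (le_of_lt h2) h⟩, h2⟩]
  rw [Real.volume_Ico, ENNReal.ofReal_div_of_pos (by norm_num),
    ENNReal.div_eq_inv_mul]
  norm_num [sub_neg_eq_add, add_comm]

lemma unif_abs_gt {c : ℝ} (hc : 0 ≤ c) : unif {y : ℝ | c < |y|} = ENNReal.ofReal (1 - c) := by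
  have hset : {y : ℝ | c < |y|} = Set.Iio (-c) ∪ Set.Ioi c := by
    ext y
    simp only [Set.mem_setOf_eq, Set.mem_union, Set.mem_Iio, Set.mem_Ioi, lt_abs, lt_neg]
    tauto
  rcases le_or_gt c 1 with h1 | h1
  · rw [hset, measure_union _ measurableSet_Ioi, unif_Iio (by linarith), unif_Ioi (by linarith),
      ← ENNReal.ofReal_add (by linarith) (by linarith)]
    · ring_nf
    · refine Set.disjoint_left.2 fun y h1 h2 => ?_
      simp only [Set.mem_Iio, Set.mem_Ioi] at h1 h2
      linarith
  · rw [ENNReal.ofReal_eq_zero.2 (by linarith)]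
    rw [unif_apply]
    convert mul_zero _
    refine measure_mono_null ?_ (measure_empty)
    rintro y ⟨hy1, hy2⟩
    simp only [Set.mem_Icc] at hy1
    simp only [hset, Set.mem_union, Set.mem_Iio, Set.mem_Ioi] at hy2
    rcases hy2 with h | h <;> simp at * <;> linarith [hy1.1, hy1.2]

lemma pi_forall_lt (n : ℕ) {a : ℝ} (h : -1 ≤ a) (h' : a ≤ 1) :
    (Measure.pi fun _ : Fin n => unif) {x | ∀ i, a < x i}
      = ENNReal.ofReal (((1-a)/2)^n) := by
  rw [show {x : Fin n → ℝ | ∀ i, a < x i} = Set.pi Set.univ (fun _ => Set.Ioi a) by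
    ext x; simp [Set.mem_pi]]
  rw [Measure.pi_pi, unif_Ioi h, Finset.prod_const, Finset.card_univ, Fintype.card_fin,
    ← ENNReal.ofReal_pow (by linarith)]

lemma pi_forall_le (n : ℕ) {a : ℝ} (h : -1 ≤ a) (h' : a ≤ 1) :
    (Measure.pi fun _ : Fin n => unif) {x | ∀ i, a ≤ x i}
      = ENNReal.ofReal (((1-a)/2)^n) := by
  rw [show {x : Fin n → ℝ | ∀ i, a ≤ x i} = Set.pi Set.univ (fun _ => Set.Ici a) by
    ext x; simp [Set.mem_pi, Set.mem_Ici, Pi.le_def]]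
  rw [Measure.pi_pi, unif_Ici h, Finset.prod_const, Finset.card_univ, Fintype.card_fin,
    ← ENNReal.ofReal_pow (by linarith)]

lemma pi_forall_gt (n : ℕ) {b : ℝ} (h : b ≤ 1) (h' : -1 ≤ b) :
    (Measure.pi fun _ : Fin n => unif) {x | ∀ i, x i < b}
      = ENNReal.ofReal (((1+b)/2)^n) := by
  rw [show {x : Fin n → ℝ | ∀ i, x i < b} = Set.pi Set.univ (fun _ => Set.Iio b) by
    ext x; simp [Set.mem_pi]]
  rw [Measure.pi_pi, unif_Iio h, Finset.prod_const, Finset.card_univ, Fintype.card_fin,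
    ← ENNReal.ofReal_pow (by linarith)]

lemma pi_ae_cube (n : ℕ) :
    ∀ᵐ x ∂(Measure.pi fun _ : Fin n => unif), ∀ i, x i ∈ Set.Icc (-1:ℝ) 1 := by
  rw [MeasureTheory.ae_all_iff]
  intro i
  rw [ae_iff]
  have : {x : Fin n → ℝ | ¬ x i ∈ Set.Icc (-1:ℝ) 1} =
      Function.eval i ⁻¹' (Set.Icc (-1:ℝ) 1)ᶜ := rfl
  rw [this, Set.eval_preimage, Measure.pi_pi]
  apply Finset.prod_eq_zero (Finset.mem_univ i)
  simp [unif_compl_Icc]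

lemma key (n : ℕ) (f : (Fin n → ℝ) → ℝ) (hf : Measurable f) (hf0 : ∀ x, 0 ≤ f x)
    (hf1 : ∀ᵐ x ∂(Measure.pi fun _ : Fin n => unif), f x ≤ 1) :
    ((Measure.pi fun _ : Fin n => unif).prod unif) {p : (Fin n → ℝ) × ℝ | f p.1 < |p.2|}
      = ∫⁻ t in Set.Ioi (0:ℝ), (Measure.pi fun _ : Fin n => unif) {x | t < 1 - f x} := by
  have hms : MeasurableSet {p : (Fin n → ℝ) × ℝ | f p.1 < |p.2|} := by
    exact measurableSet_lt (hf.comp measurable_fst) measurable_snd.abs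
  rw [Measure.prod_apply hms]
  have h1 : ∀ x, unif (Prod.mk x ⁻¹' {p : (Fin n → ℝ) × ℝ | f p.1 < |p.2|})
      = ENNReal.ofReal (1 - f x) := fun x => by
    have h2 : Prod.mk x ⁻¹' {p : (Fin n → ℝ) × ℝ | f p.1 < |p.2|} = {y | f x < |y|} := rfl
    rw [h2, unif_abs_gt (hf0 x)]
  simp_rw [h1]
  exact lintegral_eq_lintegral_meas_lt _ (hf1.mono fun x hx => by simp only [Pi.zero_apply]; linarith)
    ((measurable_const.sub hf).aemeasurable)

section regions
variable {n : ℕ} (hne : (Finset.univ : Finset (Fin n)).Nonempty)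

lemma min_region1 {s t : ℝ} (hs0 : 0 < s) (hs1 : s ≤ 1) (ht0 : 0 < t) (ht1 : t < 1 - s) :
    (Measure.pi fun _ : Fin n => unif) {x | t < 1 - |min (Finset.univ.inf' hne x) s|}
      = ENNReal.ofReal (((2-t)/2)^n) := by
  have hset : {x : Fin n → ℝ | t < 1 - |min (Finset.univ.inf' hne x) s|}
      = {x | ∀ i, t - 1 < x i} := by
    ext x
    simp only [Set.mem_setOf_eq]
    rw [show (t < 1 - |min (Finset.univ.inf' hne x) s| ↔
        |min (Finset.univ.inf' hne x) s| < 1 - t) from ⟨fun h => by linarith, fun h => by linarith⟩,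
      abs_lt, lt_min_iff, min_lt_iff]
    constructor
    · rintro ⟨⟨h1, _⟩, _⟩ i
      have := (Finset.lt_inf'_iff hne).1 h1 i (Finset.mem_univ i)
      linarith
    · intro hx
      refine ⟨⟨?_, by linarith⟩, Or.inr (by linarith)⟩
      rw [Finset.lt_inf'_iff]
      intro i _
      linarith [hx i]
  rw [hset, pi_forall_lt n (by linarith) (by linarith)]
  congr 2
  ring

lemma min_region2 {s t : ℝ} (hs1 : s ≤ 1) (ht0 : 1 - s < t) (ht1 : t < 1) (hs0 : 0 < s) :
    (Measure.pi fun _ : Fin n => unif) {x | t < 1 - |min (Finset.univ.inf' hne x) s|}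
      = ENNReal.ofReal (((2-t)/2)^n - (t/2)^n) := by
  have hset : {x : Fin n → ℝ | t < 1 - |min (Finset.univ.inf' hne x) s|}
      = {x | ∀ i, t - 1 < x i} \ {x | ∀ i, 1 - t ≤ x i} := by
    ext x
    simp only [Set.mem_setOf_eq, Set.mem_diff, Set.mem_setOf_eq]
    rw [show (t < 1 - |min (Finset.univ.inf' hne x) s| ↔
        |min (Finset.univ.inf' hne x) s| < 1 - t) from ⟨fun h => by linarith, fun h => by linarith⟩,
      abs_lt, lt_min_iff, min_lt_iff]
    constructor
    · rintro ⟨⟨h1, _⟩, h2⟩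
      refine ⟨fun i => ?_, fun hall => ?_⟩
      · have := (Finset.lt_inf'_iff hne).1 h1 i (Finset.mem_univ i)
        linarith
      · rcases h2 with h2 | h2
        · obtain ⟨i, _, hi⟩ := (Finset.inf'_lt_iff hne).1 h2
          linarith [hall i]
        · linarith
    · rintro ⟨hall, hnot⟩
      push_neg at hnot
      obtain ⟨i, hi⟩ := hnot
      refine ⟨⟨?_, by linarith⟩, Or.inl ?_⟩
      · rw [Finset.lt_inf'_iff]; intro j _; linarith [hall j]
      · exact (Finset.inf'_lt_iff hne).2 ⟨i, Finset.mem_univ i, by linarith⟩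
  have hsub : {x : Fin n → ℝ | ∀ i, 1 - t ≤ x i} ⊆ {x | ∀ i, t - 1 < x i} :=
    fun x hx i => by have := hx i; linarith
  have hmB : MeasurableSet {x : Fin n → ℝ | ∀ i, 1 - t ≤ x i} := by
    rw [show {x : Fin n → ℝ | ∀ i, 1 - t ≤ x i} = Set.pi Set.univ (fun _ => Set.Ici (1-t)) by
      ext x; simp [Set.mem_pi, Set.mem_Ici, Pi.le_def]]
    exact MeasurableSet.univ_pi fun _ => measurableSet_Ici
  rw [hset, measure_diff hsub hmB.nullMeasurableSet (measure_ne_top _ _),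
    pi_forall_lt n (by linarith) (by linarith), pi_forall_le n (by linarith) (by linarith),
    show ((1 - (t-1))/2) = (2-t)/2 by ring, show ((1 - (1-t))/2) = t/2 by ring,
    ENNReal.ofReal_sub _ (pow_nonneg (by linarith) n)]

lemma min_region3 {c t : ℝ} (ht : 1 ≤ t) (hc : 0 ≤ c) (x : Fin n → ℝ) :
    ¬ (t < 1 - c) := by linarith

lemma max_region1 {s t : ℝ} (hs0 : 0 < s) (ht0 : 0 < t) (ht1 : t < 1 - s) :
    (Measure.pi fun _ : Fin n => unif) {x | t < 1 - |max (Finset.univ.sup' hne x) s|}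
      = ENNReal.ofReal (((2-t)/2)^n) := by
  have habs : ∀ x : Fin n → ℝ, |max (Finset.univ.sup' hne x) s| = max (Finset.univ.sup' hne x) s :=
    fun x => abs_of_pos (lt_of_lt_of_le hs0 (le_max_right _ _))
  have hset : {x : Fin n → ℝ | t < 1 - |max (Finset.univ.sup' hne x) s|}
      = {x | ∀ i, x i < 1 - t} := by
    ext x
    simp only [Set.mem_setOf_eq, habs]
    rw [show (t < 1 - max (Finset.univ.sup' hne x) s ↔
        max (Finset.univ.sup' hne x) s < 1 - t) from ⟨fun h => by linarith, fun h => by linarith⟩,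
      max_lt_iff]
    constructor
    · rintro ⟨h1, _⟩ i
      exact lt_of_le_of_lt (Finset.le_sup' _ (Finset.mem_univ i)) h1
    · intro hx
      refine ⟨?_, by linarith⟩
      rw [Finset.sup'_lt_iff]
      intro i _
      exact hx i
  rw [hset, pi_forall_gt n (by linarith) (by linarith)]
  congr 2
  ring

lemma max_region2 {s t : ℝ} (hs0 : 0 < s) (ht : 1 - s < t) :
    (Measure.pi fun _ : Fin n => unif) {x | t < 1 - |max (Finset.univ.sup' hne x) s|} = 0 := by
  have hset : {x : Fin n → ℝ | t < 1 - |max (Finset.univ.sup' hne x) s|} = ∅ := by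
    ext x
    simp only [Set.mem_setOf_eq, Set.mem_empty_iff_false, iff_false, not_lt]
    have h1 : s ≤ |max (Finset.univ.sup' hne x) s| :=
      le_trans (le_max_right _ _) (le_abs_self _)
    linarith
  rw [hset, measure_empty]

end regions

theorem stmt_11 (k : ℕ) (hk : 2 ≤ k) (s : ℝ) (hs0 : 0 < s) (hs1 : s ≤ 1) :
    (((Measure.pi fun _ : Fin (k - 1) => unif).prod unif)
        {p : (Fin (k - 1) → ℝ) × ℝ |
          |min (Finset.univ.inf' (Finset.univ_nonempty_iff.2 ⟨⟨0, by omega⟩⟩) p.1) s| < |p.2|}).toReal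
      - (((Measure.pi fun _ : Fin (k - 1) => unif).prod unif)
        {p : (Fin (k - 1) → ℝ) × ℝ |
          |max (Finset.univ.sup' (Finset.univ_nonempty_iff.2 ⟨⟨0, by omega⟩⟩) p.1) s| < |p.2|}).toReal
      = ((1 + s) ^ k + (1 - s) ^ k - 2) / (k * 2 ^ (k - 1)) := by
  obtain ⟨n, rfl⟩ : ∃ n, k = n + 1 := ⟨k - 1, by omega⟩
  have hn : 1 ≤ n := by omega
  have hne : (Finset.univ : Finset (Fin n)).Nonempty :=
    Finset.univ_nonempty_iff.2 ⟨⟨0, by omega⟩⟩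
  simp only [Nat.add_sub_cancel]
  show (((Measure.pi fun _ : Fin n => unif).prod unif)
        {p : (Fin n → ℝ) × ℝ | |min (Finset.univ.inf' hne p.1) s| < |p.2|}).toReal
      - (((Measure.pi fun _ : Fin n => unif).prod unif)
        {p : (Fin n → ℝ) × ℝ | |max (Finset.univ.sup' hne p.1) s| < |p.2|}).toReal
      = ((1 + s) ^ (n+1) + (1 - s) ^ (n+1) - 2) / ((((n+1 : ℕ)) : ℝ) * 2 ^ n)
  set μ := Measure.pi fun _ : Fin n => unif with hμdef
  -- continuity facts
  have hcmin : Continuous (fun x : Fin n → ℝ => |min (Finset.univ.inf' hne x) s|) :=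
    ((Continuous.finset_inf'_apply hne fun i _ => continuous_apply i).min continuous_const).abs
  have hcmax : Continuous (fun x : Fin n → ℝ => |max (Finset.univ.sup' hne x) s|) :=
    ((Continuous.finset_sup'_apply hne fun i _ => continuous_apply i).max continuous_const).abs
  -- a.e. bounds
  have hbmin : ∀ᵐ x ∂μ, |min (Finset.univ.inf' hne x) s| ≤ 1 :=
    (pi_ae_cube n).mono fun x hx => by
      rw [abs_le]
      refine ⟨le_min (Finset.le_inf' hne _ fun i _ => (hx i).1) (by linarith), ?_⟩
      exact le_trans (min_le_right _ _) hs1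
  have hbmax : ∀ᵐ x ∂μ, |max (Finset.univ.sup' hne x) s| ≤ 1 :=
    (pi_ae_cube n).mono fun x hx => by
      rw [abs_le]
      refine ⟨le_trans (by linarith) (le_max_right _ _), ?_⟩
      exact max_le (Finset.sup'_le hne _ fun i _ => (hx i).2) hs1
  have hmin : (μ.prod unif)
        {p : (Fin n → ℝ) × ℝ | |min (Finset.univ.inf' hne p.1) s| < |p.2|}
      = ∫⁻ t in Set.Ioi (0:ℝ), μ {x | t < 1 - |min (Finset.univ.inf' hne x) s|} :=
    key n (fun x => |min (Finset.univ.inf' hne x) s|) hcmin.measurable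
      (fun x => abs_nonneg _) hbmin
  have hmax : (μ.prod unif)
        {p : (Fin n → ℝ) × ℝ | |max (Finset.univ.sup' hne p.1) s| < |p.2|}
      = ∫⁻ t in Set.Ioi (0:ℝ), μ {x | t < 1 - |max (Finset.univ.sup' hne x) s|} :=
    key n (fun x => |max (Finset.univ.sup' hne x) s|) hcmax.measurable
      (fun x => abs_nonneg _) hbmax
  rw [hmin, hmax]
  -- split of the domain
  have h0s : (0:ℝ) ≤ 1 - s := by linarith
  have hsplit1 : ∀ F : ℝ → ENNReal, ∫⁻ t in Set.Ioi (0:ℝ), F t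
      = (∫⁻ t in Set.Ioc (0:ℝ) (1-s), F t) + ∫⁻ t in Set.Ioi (1-s), F t := fun F => by
    rw [← Set.Ioc_union_Ioi_eq_Ioi h0s, lintegral_union measurableSet_Ioi Set.Ioc_disjoint_Ioi_same]
  have hsplit2 : ∀ F : ℝ → ENNReal, ∫⁻ t in Set.Ioi (1-s:ℝ), F t
      = (∫⁻ t in Set.Ioc (1-s:ℝ) 1, F t) + ∫⁻ t in Set.Ioi (1:ℝ), F t := fun F => by
    rw [← Set.Ioc_union_Ioi_eq_Ioi (by linarith : (1-s:ℝ) ≤ 1),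
      lintegral_union measurableSet_Ioi Set.Ioc_disjoint_Ioi_same]
  rw [hsplit1, hsplit2, hsplit1]
  -- pieces
  have hG1 : Continuous (fun t : ℝ => ((2-t)/2)^n) := by fun_prop
  have hG2 : Continuous (fun t : ℝ => ((2-t)/2)^n - (t/2)^n) := by fun_prop
  have P1min : (∫⁻ t in Set.Ioc (0:ℝ) (1-s), μ {x | t < 1 - |min (Finset.univ.inf' hne x) s|})
      = ENNReal.ofReal (∫ t in (0:ℝ)..(1-s), ((2-t)/2)^n) :=
    lint_piece h0s _ hG1
      (fun t ht => pow_nonneg (div_nonneg (by linarith [ht.2]) (by norm_num)) n) _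
      (fun t ht => min_region1 hne hs0 hs1 ht.1 ht.2)
  have P2min : (∫⁻ t in Set.Ioc (1-s:ℝ) 1, μ {x | t < 1 - |min (Finset.univ.inf' hne x) s|})
      = ENNReal.ofReal (∫ t in (1-s:ℝ)..1, (((2-t)/2)^n - (t/2)^n)) :=
    lint_piece (by linarith) _ hG2
      (fun t ht => sub_nonneg.2 (pow_le_pow_left₀
        (div_nonneg (by linarith [ht.1]) (by norm_num)) (by linarith [ht.2]) n)) _
      (fun t ht => min_region2 hne hs1 ht.1 ht.2 hs0)
  have P3min : (∫⁻ t in Set.Ioi (1:ℝ), μ {x | t < 1 - |min (Finset.univ.inf' hne x) s|}) = 0 := by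
    have hz : ∀ t ∈ Set.Ioi (1:ℝ), μ {x | t < 1 - |min (Finset.univ.inf' hne x) s|}
        = (fun _ : ℝ => (0:ENNReal)) t := by
      intro t ht
      simp only [Set.mem_Ioi] at ht
      have he : {x : Fin n → ℝ | t < 1 - |min (Finset.univ.inf' hne x) s|} = ∅ := by
        ext x
        simp only [Set.mem_setOf_eq, Set.mem_empty_iff_false, iff_false, not_lt]
        have := abs_nonneg (min (Finset.univ.inf' hne x) s)
        linarith
      rw [he, measure_empty]
    rw [setLIntegral_congr_fun measurableSet_Ioi hz, lintegral_zero]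
  have P1max : (∫⁻ t in Set.Ioc (0:ℝ) (1-s), μ {x | t < 1 - |max (Finset.univ.sup' hne x) s|})
      = ENNReal.ofReal (∫ t in (0:ℝ)..(1-s), ((2-t)/2)^n) :=
    lint_piece h0s _ hG1
      (fun t ht => pow_nonneg (div_nonneg (by linarith [ht.2]) (by norm_num)) n) _
      (fun t ht => max_region1 hne hs0 ht.1 ht.2)
  have P2max : (∫⁻ t in Set.Ioi (1-s:ℝ), μ {x | t < 1 - |max (Finset.univ.sup' hne x) s|}) = 0 := by
    have hz : ∀ t ∈ Set.Ioi (1-s:ℝ), μ {x | t < 1 - |max (Finset.univ.sup' hne x) s|}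
        = (fun _ : ℝ => (0:ENNReal)) t := fun t ht => max_region2 hne hs0 ht
    rw [setLIntegral_congr_fun measurableSet_Ioi hz, lintegral_zero]
  rw [P1min, P2min, P3min, P1max, P2max]
  -- evaluate the interval integrals
  have e1 : ∫ t in (0:ℝ)..(1-s), ((2-t)/2)^n = (2^(n+1) - (1+s)^(n+1))/(2^n*(n+1)) := by
    rw [int_J1, show ((2:ℝ)-(1-s)) = 1+s by ring, show ((2:ℝ)-0) = 2 by ring]
  have e2 : ∫ t in (1-s:ℝ)..1, (((2-t)/2)^n - (t/2)^n)
      = ((1+s)^(n+1) + (1-s)^(n+1) - 2)/(2^n*(n+1)) := by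
    rw [intervalIntegral.integral_sub ((by fun_prop : Continuous fun t:ℝ => ((2-t)/2)^n).intervalIntegrable _ _)
      ((by fun_prop : Continuous fun t:ℝ => (t/2)^n).intervalIntegrable _ _),
      int_J1, int_J2, show ((2:ℝ)-(1-s)) = 1+s by ring, show ((2:ℝ)-1) = 1 by ring]
    rw [div_sub_div_same]
    congr 1
    simp [one_pow]
    ring
  rw [e1, e2]
  -- nonnegativity facts
  have hd : (0:ℝ) < 2^n*(n+1) := by positivity
  have hb1 : (0:ℝ) ≤ (2^(n+1) - (1+s)^(n+1))/(2^n*(n+1)) :=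
    div_nonneg (sub_nonneg.2 (pow_le_pow_left₀ (by linarith) (by linarith) _)) (le_of_lt hd)
  have bern1 : 1 + ((n:ℝ)+1)*s ≤ (1+s)^(n+1) := by
    have := one_add_mul_le_pow (by linarith : (-2:ℝ) ≤ s) (n+1)
    push_cast at this ⊢
    linarith
  have bern2 : 1 - ((n:ℝ)+1)*s ≤ (1-s)^(n+1) := by
    have := one_add_mul_le_pow (by linarith : (-2:ℝ) ≤ -s) (n+1)
    push_cast at this ⊢
    have h' : (1:ℝ) + -s = 1 - s := by ring
    rw [h'] at this
    linarith
  have hb2 : (0:ℝ) ≤ ((1+s)^(n+1) + (1-s)^(n+1) - 2)/(2^n*(n+1)) :=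
    div_nonneg (by nlinarith) (le_of_lt hd)
  rw [add_zero, add_zero, ← ENNReal.ofReal_add hb1 hb2,
    ENNReal.toReal_ofReal (by linarith), ENNReal.toReal_ofReal hb1]
  push_cast
  ring
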